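/- Let Ω ⊆ ℝⁿ be a bounded convex open set, φ : ∂Ω → ℝ ∪ {+∞} lower semicontinuous and convex on every segment in ∂Ω, and a : ℝⁿ → ℝ an affine function with a ≤ φ on ∂Ω. Then the set {x ∈ ℝⁿ : conv-env(φ)(x) = a(x)} equals the convex hull of {x ∈ ∂Ω : φ(x) = a(x)}. -/

import Mathlib

open Set Filter Topology
open scoped RealInnerProductSpace

noncomputable section

abbrev En (n : ℕ) := EuclideanSpace ℝ (Fin n)

/-- The convex envelope of `φ`: the pointwise supremum of all affine functions
`x ↦ ⟪x, y⟫ + η` majorized by `φ` on `S`. -/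
def convEnv {n : ℕ} (S : Set (En n)) (φ : En n → EReal) (x : En n) : EReal :=
  ⨆ p : {p : En n × ℝ // ∀ z ∈ S, ((⟪z, p.1⟫ + p.2 : ℝ) : EReal) ≤ φ z},
    ((⟪x, p.1.1⟫ + p.1.2 : ℝ) : EReal)

/-- The convex hull of a compact set in a finite-dimensional Euclidean space is compact. -/
lemma isCompact_convexHull_fin {n : ℕ} {K : Set (En n)} (hK : IsCompact K) :
    IsCompact (convexHull ℝ K) := by
  rcases K.eq_empty_or_nonempty with h | ⟨z₀, hz₀⟩
  · simp [h]
  set N := n + 1 with hN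
  set g : (Fin N → ℝ) × (Fin N → En n) → En n := fun q => ∑ j, q.1 j • q.2 j with hg
  have hgc : Continuous g := continuous_finset_sum _ fun j _ =>
    ((continuous_apply j).comp continuous_fst).smul ((continuous_apply j).comp continuous_snd)
  have hs : IsCompact (stdSimplex ℝ (Fin N) ×ˢ Set.univ.pi fun _ : Fin N => K) :=
    (isCompact_stdSimplex (𝕜 := ℝ) (ι := Fin N)).prod (isCompact_univ_pi fun _ => hK)
  have heq : convexHull ℝ K = g '' (stdSimplex ℝ (Fin N) ×ˢ Set.univ.pi fun _ : Fin N => K) := by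
    apply Subset.antisymm
    · intro x hx
      obtain ⟨ι, hft, z, w, hzK, hai, hwpos, hwsum, hxe⟩ :=
        eq_pos_convex_span_of_mem_convexHull hx
      have hcard : Fintype.card ι ≤ N := by
        refine le_trans hai.card_le_finrank_succ ?_
        have h1 : Module.finrank ℝ ↥(vectorSpan ℝ (Set.range z)) ≤ Module.finrank ℝ (En n) :=
          Submodule.finrank_le _
        have h2 : Module.finrank ℝ (En n) = n := finrank_euclideanSpace_fin
        omega
      obtain ⟨e⟩ : Nonempty (ι ↪ Fin N) :=
        Function.Embedding.nonempty_iff_card_le.2 (by simpa using hcard)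
      classical
      set w' : Fin N → ℝ := fun j => ∑ i ∈ Finset.univ.filter (fun i => e i = j), w i with hw'
      set p' : Fin N → En n := fun j => if h : ∃ i, e i = j then z h.choose else z₀ with hp'
      have hp'K : ∀ j, p' j ∈ K := by
        intro j
        rw [hp']
        by_cases h : ∃ i, e i = j
        · simp only [dif_pos h]
          exact hzK (Set.mem_range_self _)
        · simp only [dif_neg h]
          exact hz₀
      have hpe : ∀ i, p' (e i) = z i := by
        intro i
        have h : ∃ i', e i' = e i := ⟨i, rfl⟩
        simp only [hp', dif_pos h]
        exact congrArg z (e.injective h.choose_spec)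
      have hsum : ∑ j, w' j = 1 := by
        rw [hw']
        rw [Finset.sum_fiberwise_of_maps_to (fun i _ => Finset.mem_univ (e i)) w]
        exact hwsum
      have hnonneg : ∀ j, 0 ≤ w' j :=
        fun j => Finset.sum_nonneg fun i _ => (hwpos i).le
      refine ⟨(w', p'), ⟨⟨hnonneg, hsum⟩, fun j _ => hp'K j⟩, ?_⟩
      show ∑ j, w' j • p' j = x
      calc ∑ j, w' j • p' j
          = ∑ j, ∑ i ∈ Finset.univ.filter (fun i => e i = j), w i • p' j := by
            refine Finset.sum_congr rfl fun j _ => ?_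
            rw [hw', Finset.sum_smul]
        _ = ∑ j, ∑ i ∈ Finset.univ.filter (fun i => e i = j), w i • z i := by
            refine Finset.sum_congr rfl fun j _ => Finset.sum_congr rfl fun i hi => ?_
            rw [← (Finset.mem_filter.1 hi).2, hpe]
        _ = ∑ i, w i • z i :=
            Finset.sum_fiberwise_of_maps_to (fun i _ => Finset.mem_univ (e i)) _
        _ = x := hxe
    · rintro _ ⟨⟨w, p⟩, ⟨hw, hp⟩, rfl⟩
      exact (convex_convexHull ℝ K).sum_mem (fun i _ => hw.1 i) hw.2
        (fun i _ => subset_convexHull ℝ K (hp i (Set.mem_univ i)))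
  rw [heq]
  exact hs.image hgc

theorem stmt6 {n : ℕ} (Ω : Set (En n)) (hb : Bornology.IsBounded Ω)
    (hc : Convex ℝ Ω) (ho : IsOpen Ω) (φ : En n → EReal)
    (hbot : ∀ x ∈ frontier Ω, φ x ≠ ⊥)
    (hlsc : LowerSemicontinuousOn φ (frontier Ω))
    (hseg : ∀ a b : En n, segment ℝ a b ⊆ frontier Ω →
      Convex ℝ {p : En n × ℝ | p.1 ∈ segment ℝ a b ∧ φ p.1 ≤ (p.2 : EReal)})
    (y : En n) (η : ℝ)
    (ha : ∀ z ∈ frontier Ω, ((⟪z, y⟫ + η : ℝ) : EReal) ≤ φ z) :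
    {x | convEnv (frontier Ω) φ x = ((⟪x, y⟫ + η : ℝ) : EReal)} =
      convexHull ℝ {x | x ∈ frontier Ω ∧ φ x = ((⟪x, y⟫ + η : ℝ) : EReal)} := by
  classical
  set A : En n → ℝ := fun z => ⟪z, y⟫ + η with hA
  set K : Set (En n) := {x | x ∈ frontier Ω ∧ φ x = ((A x : ℝ) : EReal)} with hK
  have hAc : Continuous A := (continuous_id.inner continuous_const).add continuous_const
  have hFb : Bornology.IsBounded (frontier Ω) := hb.closure.subset frontier_subset_closure
  have hFcpt : IsCompact (frontier Ω) :=
    Metric.isCompact_of_isClosed_isBounded isClosed_frontier hFb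
  have hKF : K ⊆ frontier Ω := fun z hz => hz.1
  have hKcl : IsClosed K := by
    refine isClosed_of_closure_subset ?_
    intro z₀ hz₀
    have hz₀F : z₀ ∈ frontier Ω := isClosed_frontier.closure_subset (closure_mono hKF hz₀)
    refine ⟨hz₀F, ?_⟩
    by_contra hne
    have hlt : ((A z₀ : ℝ) : EReal) < φ z₀ := lt_of_le_of_ne (ha z₀ hz₀F) (Ne.symm hne)
    obtain ⟨c, hc1, hc2⟩ := exists_between hlt
    have h1 : ∀ᶠ w in 𝓝[frontier Ω] z₀, c < φ w := hlsc z₀ hz₀F c hc2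
    have h2 : ∀ᶠ w in 𝓝[frontier Ω] z₀, ((A w : ℝ) : EReal) < c :=
      (((continuous_coe_real_ereal.comp hAc).continuousAt).eventually_lt
        continuousAt_const hc1).filter_mono nhdsWithin_le_nhds
    have h3 : ∀ᶠ w in 𝓝[frontier Ω] z₀, w ∉ K := by
      filter_upwards [h1, h2] with w hw1 hw2 hwK
      rw [hwK.2] at hw1
      exact absurd (hw2.trans hw1) (lt_irrefl _)
    have hnb : (𝓝[K] z₀).NeBot := mem_closure_iff_nhdsWithin_neBot.1 hz₀
    have h3' : ∀ᶠ w in 𝓝[K] z₀, w ∉ K := h3.filter_mono (nhdsWithin_mono z₀ hKF)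
    obtain ⟨w, hw1, hw2⟩ := (h3'.and eventually_mem_nhdsWithin).exists
    exact hw1 hw2
  have hKcpt : IsCompact K := hFcpt.of_isClosed_subset hKcl hKF
  have hCH : IsCompact (convexHull ℝ K) := isCompact_convexHull_fin hKcpt
  ext x
  simp only [Set.mem_setOf_eq]
  constructor
  · intro hx
    by_contra hxK
    obtain ⟨f, u, hfu, hux⟩ :=
      geometric_hahn_banach_closed_point (convex_convexHull ℝ K) hCH.isClosed hxK
    -- key estimate on the part of the frontier where `u ≤ f z`
    set Fp : Set (En n) := {z | z ∈ frontier Ω ∧ u ≤ f z} with hFp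
    have hFpcpt : IsCompact Fp := hFcpt.of_isClosed_subset
      (isClosed_frontier.inter (isClosed_le continuous_const f.continuous)) (fun z hz => hz.1)
    have hcov : ∀ z, z ∈ Fp → ∃ V : Set (En n), V ∈ 𝓝 z ∧ ∃ δ : ℝ, 0 < δ ∧
        ∀ w, w ∈ V → w ∈ frontier Ω → ((A w + δ : ℝ) : EReal) ≤ φ w := by
      intro z hz
      have hzF : z ∈ frontier Ω := hz.1
      have hzK : z ∉ K := fun hzK => absurd (hfu z (subset_convexHull ℝ K hzK)) (not_lt.2 hz.2)
      have hlt : ((A z : ℝ) : EReal) < φ z :=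
        lt_of_le_of_ne (ha z hzF) fun h => hzK ⟨hzF, h.symm⟩
      obtain ⟨r, hr1, hr2⟩ := EReal.exists_between_coe_real hlt
      have hrA : A z < r := EReal.coe_lt_coe_iff.1 hr1
      set δ := (r - A z) / 2 with hδ
      have hδpos : 0 < δ := hδ ▸ div_pos (sub_pos.2 hrA) two_pos
      have h1 : ∀ᶠ w in 𝓝[frontier Ω] z, (r : EReal) < φ w := hlsc z hzF r hr2
      have h2 : ∀ᶠ w in 𝓝[frontier Ω] z, A w < A z + δ :=
        ((hAc.continuousAt).eventually_lt continuousAt_const (by linarith)).filter_mono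
          nhdsWithin_le_nhds
      have h3 := h1.and h2
      rw [eventually_nhdsWithin_iff] at h3
      refine ⟨{w | w ∈ frontier Ω → (r : EReal) < φ w ∧ A w < A z + δ}, h3, δ, hδpos, ?_⟩
      intro w hwV hwF
      obtain ⟨hφw, hAw⟩ := hwV hwF
      have hle : A w + δ ≤ r := by rw [hδ] at hAw ⊢; linarith
      exact (EReal.coe_le_coe_iff.2 hle).trans hφw.le
    choose V hVn δf hδf hVp using hcov
    obtain ⟨t, ht⟩ := hFpcpt.elim_nhds_subcover' V hVn
    have key : ∃ δ : ℝ, 0 < δ ∧ ∀ z ∈ frontier Ω, u ≤ f z →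
        ((A z + δ : ℝ) : EReal) ≤ φ z := by
      rcases t.eq_empty_or_nonempty with rfl | htne
      · refine ⟨1, one_pos, fun z hzF hzu => absurd (ht ⟨hzF, hzu⟩) (by simp)⟩
      · refine ⟨t.inf' htne fun z => δf z z.2, ?_, ?_⟩
        · exact (Finset.lt_inf'_iff htne).2 fun i _ => hδf i i.2
        · intro z hzF hzu
          obtain ⟨w, hwt, hwV⟩ := Set.mem_iUnion₂.1 (ht ⟨hzF, hzu⟩)
          refine le_trans ?_ (hVp w w.2 z hwV hzF)
          apply EReal.coe_le_coe_iff.2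
          have : t.inf' htne (fun z => δf z z.2) ≤ δf w w.2 := Finset.inf'_le _ hwt
          linarith
    obtain ⟨δ, hδpos, hkey⟩ := key
    obtain ⟨R, hR⟩ := hFb.exists_norm_le
    set M : ℝ := ‖f‖ * |R| + |u| + 1 with hM
    have hMpos : 0 < M := by positivity
    have hfM : ∀ z ∈ frontier Ω, f z - u ≤ M := by
      intro z hzF
      have h1 : f z ≤ ‖f‖ * ‖z‖ := le_trans (le_abs_self _) (f.le_opNorm z)
      have h2 : ‖z‖ ≤ |R| := (hR z hzF).trans (le_abs_self R)
      have h3 : ‖f‖ * ‖z‖ ≤ ‖f‖ * |R| := mul_le_mul_of_nonneg_left h2 (norm_nonneg f)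
      have h4 : -u ≤ |u| := neg_le_abs u
      rw [hM]; linarith
    set ε : ℝ := δ / M with hε
    have hεpos : 0 < ε := div_pos hδpos hMpos
    set v : En n := (InnerProductSpace.toDual ℝ (En n)).symm f with hv
    have hvz : ∀ z : En n, ⟪z, v⟫ = f z := by
      intro z
      rw [real_inner_comm]
      exact InnerProductSpace.toDual_symm_apply
    have hform : ∀ z : En n, ⟪z, y + ε • v⟫ + (η - ε * u) = A z + ε * (f z - u) := by
      intro z
      rw [inner_add_right, real_inner_smul_right, hvz, hA]
      ring
    have hcomp : ∀ z ∈ frontier Ω, ((⟪z, y + ε • v⟫ + (η - ε * u) : ℝ) : EReal) ≤ φ z := by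
      intro z hzF
      rw [hform z]
      by_cases hzu : u ≤ f z
      · refine le_trans ?_ (hkey z hzF hzu)
        apply EReal.coe_le_coe_iff.2
        have h1 : f z - u ≤ M := hfM z hzF
        have h2 : ε * (f z - u) ≤ ε * M := mul_le_mul_of_nonneg_left h1 hεpos.le
        have h3 : ε * M = δ := div_mul_cancel₀ _ (ne_of_gt hMpos)
        linarith
      · push_neg at hzu
        refine le_trans ?_ (ha z hzF)
        apply EReal.coe_le_coe_iff.2
        have h1 : ε * (f z - u) ≤ 0 :=
          mul_nonpos_of_nonneg_of_nonpos hεpos.le (by linarith)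
        rw [hA]; simp only []
        linarith [hform z]
      
    have hle : ((⟪x, y + ε • v⟫ + (η - ε * u) : ℝ) : EReal) ≤ convEnv (frontier Ω) φ x := by
      rw [convEnv]
      exact le_iSup (fun p : {p : En n × ℝ //
        ∀ z ∈ frontier Ω, ((⟪z, p.1⟫ + p.2 : ℝ) : EReal) ≤ φ z} =>
          ((⟪x, p.1.1⟫ + p.1.2 : ℝ) : EReal)) ⟨(y + ε • v, η - ε * u), hcomp⟩
    rw [hx] at hle
    rw [hform x] at hle
    have hreal : A x + ε * (f x - u) ≤ A x := EReal.coe_le_coe_iff.1 hle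
    have : 0 < ε * (f x - u) := mul_pos hεpos (sub_pos.2 hux)
    linarith
  · intro hx
    apply le_antisymm
    · rw [convEnv]
      apply iSup_le
      rintro ⟨⟨p1, p2⟩, hp⟩
      apply EReal.coe_le_coe_iff.2
      have hconv : Convex ℝ {w : En n | ⟪w, p1⟫ + p2 ≤ ⟪w, y⟫ + η} := by
        have hsetEq : {w : En n | ⟪w, p1⟫ + p2 ≤ ⟪w, y⟫ + η}
            = {w : En n | ⟪w, p1 - y⟫ ≤ η - p2} := by
          ext w
          simp only [Set.mem_setOf_eq, inner_sub_right]
          constructor <;> intro <;> linarith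
        rw [hsetEq]
        exact convex_halfSpace_le (f := fun w : En n => ⟪w, p1 - y⟫)
          ⟨fun a b => inner_add_left _ _ _,
           fun c a => by rw [smul_eq_mul]; exact real_inner_smul_left _ _ _⟩ _
      have hKsub : K ⊆ {w : En n | ⟪w, p1⟫ + p2 ≤ ⟪w, y⟫ + η} := by
        intro z hz
        have h1 := hp z hz.1
        rw [hz.2] at h1
        exact EReal.coe_le_coe_iff.1 h1
      exact convexHull_min hKsub hconv hx
    · rw [convEnv]
      exact le_iSup (fun p : {p : En n × ℝ //
        ∀ z ∈ frontier Ω, ((⟪z, p.1⟫ + p.2 : ℝ) : EReal) ≤ φ z} =>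
          ((⟪x, p.1.1⟫ + p.1.2 : ℝ) : EReal)) ⟨(y, η), ha⟩
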